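/- arXiv:1306.4455 — 2 statements merged into one kernel-verified Lean document; each statement's English description precedes it below -/
import Mathlib

section
/- For every real number r > 1 and all vectors c, d ∈ ℝ^d (d ≥ 1): ⟨‖c‖^{r−2}c − ‖d‖^{r−2}d, c⟩ ≥ ((r−1)/r)·(‖c‖^r − ‖d‖^r). -/
open RealInnerProductSpace

theorem young_aux {a b r : ℝ} (ha : 0 ≤ a) (hb : 0 ≤ b) (hr : 1 < r) :
    a * b ^ (r - 1) ≤ a ^ r / r + (r - 1) / r * b ^ r := by
  have hpq : r.HolderConjugate (r / (r - 1)) := Real.HolderConjugate.conjExponent hr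
  have h := Real.young_inequality_of_nonneg ha (Real.rpow_nonneg hb (r - 1)) hpq
  have hb1 : (b ^ (r - 1)) ^ (r / (r - 1)) = b ^ r := by
    rw [← Real.rpow_mul hb]
    rw [mul_div_assoc', mul_comm, mul_div_assoc, div_self (by linarith : r - 1 ≠ 0), mul_one]
  rw [hb1] at h
  have hq : (r - 1) / r * b ^ r = b ^ r / (r / (r - 1)) := by
    rw [div_div_eq_mul_div, mul_comm, mul_div_assoc]
  rw [hq]
  exact h

/-- For every `r > 1` and all `c, d ∈ ℝ^d` (`d ≥ 1`):
`⟪‖c‖^(r-2) c - ‖d‖^(r-2) d, c⟫ ≥ ((r-1)/r)(‖c‖^r - ‖d‖^r)`. -/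
theorem rpow_vector_field_coercivity (n : ℕ) (hn : 1 ≤ n) (r : ℝ) (hr : 1 < r)
    (c d : EuclideanSpace ℝ (Fin n)) :
    ⟪(‖c‖ ^ (r - 2)) • c - (‖d‖ ^ (r - 2)) • d, c⟫ ≥
      ((r - 1) / r) * (‖c‖ ^ r - ‖d‖ ^ r) := by
  set a := ‖c‖ with ha
  set b := ‖d‖ with hb
  have ha0 : 0 ≤ a := norm_nonneg c
  have hb0 : 0 ≤ b := norm_nonneg d
  rw [ge_iff_le, inner_sub_left, real_inner_smul_left, real_inner_smul_left,
    real_inner_self_eq_norm_sq]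
  have claim1 : a ^ (r - 2) * a ^ 2 = a ^ r := by
    rcases eq_or_lt_of_le ha0 with h | h
    · rw [← h, Real.zero_rpow (by linarith : r ≠ 0)]
      ring
    · rw [← Real.rpow_two, ← Real.rpow_add h]
      ring_nf
  have claim2 : b ^ (r - 2) * ⟪d, c⟫ ≤ a * b ^ (r - 1) := by
    rcases eq_or_lt_of_le hb0 with h | h
    · have hd : d = 0 := norm_eq_zero.mp h.symm
      simp [hd]
      positivity
    · calc b ^ (r - 2) * ⟪d, c⟫ ≤ b ^ (r - 2) * (b * a) := by
            apply mul_le_mul_of_nonneg_left _ (Real.rpow_nonneg hb0 _)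
            exact real_inner_le_norm d c
        _ = a * b ^ (r - 1) := by
            rw [← mul_assoc, ← Real.rpow_add_one h.ne']
            ring_nf
  have hy := young_aux ha0 hb0 hr
  have hsum : a ^ r / r + (r - 1) / r * a ^ r = a ^ r := by
    field_simp
    ring
  rw [claim1]
  nlinarith [hy, claim2]
end

section
/- Let (X, μ) be a finite measure space, let r ∈ (1, 2) with conjugate exponent p (1/r + 1/p = 1), and let m : X → ℝ be measurable with 0 < m₀ ≤ m(x) ≤ m₁ for μ-a.e. x. Let q ∈ L^r(μ; ℝ²) and g ∈ L^p(μ; ℝ²). Suppose that for every v ∈ L^r(μ; ℝ²) one has ∫_X ⟨g(x), v(x) − q(x)⟩ dμ(x) ≥ ∫_X m(x) ‖v(x)‖^{r−2} ⟨v(x), q(x) − v(x)⟩ dμ(x). Then for every v ∈ L^r(μ; ℝ²): ∫_X m(x) ‖q(x)‖^{r−2} ⟨q(x), v(x)⟩ dμ(x) + ∫_X ⟨g(x), v(x)⟩ dμ(x) = 0. -/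
open MeasureTheory RealInnerProductSpace Filter

private lemma rpow_mul_self_aux {a s t : ℝ} (ha : 0 ≤ a) (hst : s + 1 = t) (ht : t ≠ 0) :
    a ^ s * a = a ^ t := by
  subst hst; exact (Real.rpow_add_one' ha ht).symm

/-- Minty-type passage: on a finite measure space, with `r ∈ (1,2)`, conjugate `p`,
`m` measurable with `0 < m₀ ≤ m ≤ m₁` a.e., `q ∈ L^r`, `g ∈ L^p`, if
`∫ ⟪g, v - q⟫ ≥ ∫ m ‖v‖^(r-2) ⟪v, q - v⟫` for all `v ∈ L^r`, then
`∫ m ‖q‖^(r-2) ⟪q, v⟫ + ∫ ⟪g, v⟫ = 0` for all `v ∈ L^r`. -/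
theorem minty_passage_power_law {X : Type*} [MeasurableSpace X] (μ : Measure X)
    [IsFiniteMeasure μ] (r p : ℝ) (hr1 : 1 < r) (hr2 : r < 2) (hrp : 1 / r + 1 / p = 1)
    (m : X → ℝ) (hm : Measurable m) (m₀ m₁ : ℝ) (hm₀ : 0 < m₀)
    (hmbd : ∀ᵐ x ∂μ, m₀ ≤ m x ∧ m x ≤ m₁)
    (q g : X → EuclideanSpace ℝ (Fin 2))
    (hq : MemLp q (ENNReal.ofReal r) μ) (hg : MemLp g (ENNReal.ofReal p) μ)
    (hineq : ∀ v : X → EuclideanSpace ℝ (Fin 2), MemLp v (ENNReal.ofReal r) μ →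
      ∫ x, ⟪g x, v x - q x⟫ ∂μ ≥ ∫ x, m x * (‖v x‖ ^ (r - 2) * ⟪v x, q x - v x⟫) ∂μ) :
    ∀ v : X → EuclideanSpace ℝ (Fin 2), MemLp v (ENNReal.ofReal r) μ →
      (∫ x, m x * (‖q x‖ ^ (r - 2) * ⟪q x, v x⟫) ∂μ) + (∫ x, ⟪g x, v x⟫ ∂μ) = 0 := by
  have hr0 : (0:ℝ) < r := by linarith
  have hr1' : (0:ℝ) < r - 1 := by linarith
  have key : ∀ w : X → EuclideanSpace ℝ (Fin 2), MemLp w (ENNReal.ofReal r) μ →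
      0 ≤ (∫ x, m x * (‖q x‖ ^ (r - 2) * ⟪q x, w x⟫) ∂μ) + ∫ x, ⟪g x, w x⟫ ∂μ := by
    intro w hw
    set C : ℝ := ∫ x, ⟪g x, w x⟫ ∂μ with hC
    set f : ℝ → X → ℝ := fun t x =>
      m x * (‖q x + t • w x‖ ^ (r - 2) * ⟪q x + t • w x, w x⟫) with hf
    -- Step A : per-t inequality
    have stepA : ∀ t : ℝ, 0 < t → 0 ≤ (∫ x, f t x ∂μ) + C := by
      intro t ht
      have hv' : MemLp (fun x => q x + t • w x) (ENNReal.ofReal r) μ := by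
        have := hq.add ((hw.const_smul t) : MemLp (t • w) (ENNReal.ofReal r) μ)
        exact this
      have H := hineq _ hv'
      have hL : (∫ x, ⟪g x, (q x + t • w x) - q x⟫ ∂μ) = t * C := by
        have : ∀ x, ⟪g x, (q x + t • w x) - q x⟫ = t * ⟪g x, w x⟫ := by
          intro x
          have : (q x + t • w x) - q x = t • w x := by abel
          rw [this, real_inner_smul_right]
        simp_rw [this]
        exact integral_const_mul t _
      have hR : (∫ x, m x * (‖q x + t • w x‖ ^ (r - 2) *
          ⟪q x + t • w x, q x - (q x + t • w x)⟫) ∂μ) = (-t) * ∫ x, f t x ∂μ := by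
        have : ∀ x, m x * (‖q x + t • w x‖ ^ (r - 2) *
            ⟪q x + t • w x, q x - (q x + t • w x)⟫) = (-t) * f t x := by
          intro x
          have h1 : q x - (q x + t • w x) = (-t) • w x := by
            rw [neg_smul]; abel
          rw [h1, real_inner_smul_right, hf]; ring
        simp_rw [this]
        exact integral_const_mul (-t) _
      rw [hL, hR] at H
      nlinarith [H]
    -- Step B : convergence of the integrals as t → 0⁺
    have hwa : AEStronglyMeasurable w μ := hw.aestronglyMeasurable
    have hqa : AEStronglyMeasurable q μ := hq.aestronglyMeasurable
    have stepB : Tendsto (fun t => ∫ x, f t x ∂μ) (nhdsWithin 0 (Set.Ioi 0))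
        (nhds (∫ x, m x * (‖q x‖ ^ (r - 2) * ⟪q x, w x⟫) ∂μ)) := by
      have hbound_int : Integrable (fun x => m₁ * (‖q x‖ + ‖w x‖) ^ r) μ := by
        have h1 : MemLp (fun x => ‖q x‖ + ‖w x‖) (ENNReal.ofReal r) μ := by
          have := hq.norm.add hw.norm
          exact this
        have h2 := h1.integrable_norm_rpow (by simp [hr0]) (by simp)
        have h3 : Integrable (fun x => (‖q x‖ + ‖w x‖) ^ r) μ := by
          refine h2.congr (Eventually.of_forall fun x => ?_)
          simp only [ENNReal.toReal_ofReal hr0.le,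
            Real.norm_of_nonneg (show (0:ℝ) ≤ ‖q x‖ + ‖w x‖ by positivity)]
        exact h3.const_mul m₁
      refine tendsto_integral_filter_of_dominated_convergence
        (fun x => m₁ * (‖q x‖ + ‖w x‖) ^ r) ?_ ?_ hbound_int ?_
      · -- a.e. strong measurability
        refine Eventually.of_forall fun t => ?_
        have hc : AEStronglyMeasurable (fun x => q x + t • w x) μ :=
          hqa.add (hwa.const_smul t)
        have h1 : AEMeasurable (fun x => ‖q x + t • w x‖ ^ (r - 2)) μ :=
          hc.norm.aemeasurable.pow_const (r - 2)
        have h2 : AEStronglyMeasurable (fun x => ⟪q x + t • w x, w x⟫) μ :=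
          hc.inner hwa
        exact (hm.aestronglyMeasurable.mul
          (h1.aestronglyMeasurable.mul h2))
      · -- the domination
        have h01 : ∀ᶠ t in nhdsWithin (0:ℝ) (Set.Ioi 0), t ∈ Set.Ioi (0:ℝ) ∧ t < 1 := by
          filter_upwards [self_mem_nhdsWithin,
            eventually_nhdsWithin_of_eventually_nhds (eventually_lt_nhds one_pos)] with t h1 h2
          exact ⟨h1, h2⟩
        filter_upwards [h01] with t ht
        filter_upwards [hmbd] with x hmx
        set c := q x + t • w x with hc
        set a := ‖q x‖ + ‖w x‖ with ha
        have ha0 : 0 ≤ a := by positivity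
        have hca : ‖c‖ ≤ a := by
          calc ‖c‖ ≤ ‖q x‖ + ‖t • w x‖ := norm_add_le _ _
            _ = ‖q x‖ + t * ‖w x‖ := by
                rw [norm_smul, Real.norm_of_nonneg ht.1.le]
            _ ≤ a := by nlinarith [norm_nonneg (w x), (show (0:ℝ) < t from ht.1).le, ht.2.le]
        have hm1 : 0 ≤ m₁ := le_trans hm₀.le (le_trans hmx.1 hmx.2)
        have hz : |‖c‖ ^ (r - 2) * ⟪c, w x⟫| ≤ a ^ r := by
          have e1 : |‖c‖ ^ (r - 2) * ⟪c, w x⟫| ≤ ‖c‖ ^ (r - 2) * (‖c‖ * ‖w x‖) := by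
            rw [abs_mul, abs_of_nonneg (Real.rpow_nonneg (norm_nonneg c) _)]
            exact mul_le_mul_of_nonneg_left (abs_real_inner_le_norm c (w x))
              (Real.rpow_nonneg (norm_nonneg c) _)
          have e2 : ‖c‖ ^ (r - 2) * (‖c‖ * ‖w x‖) = ‖c‖ ^ (r - 1) * ‖w x‖ := by
            rw [← mul_assoc, rpow_mul_self_aux (norm_nonneg c) (by ring) hr1'.ne']
          have e3 : ‖c‖ ^ (r - 1) ≤ a ^ (r - 1) :=
            Real.rpow_le_rpow (norm_nonneg c) hca hr1'.le
          have e4 : ‖w x‖ ≤ a := by nlinarith [norm_nonneg (q x)]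
          calc |‖c‖ ^ (r - 2) * ⟪c, w x⟫| ≤ ‖c‖ ^ (r - 1) * ‖w x‖ := by rw [← e2]; exact e1
            _ ≤ a ^ (r - 1) * a := by
                exact mul_le_mul e3 e4 (norm_nonneg _) (Real.rpow_nonneg ha0 _)
            _ = a ^ r := rpow_mul_self_aux ha0 (by ring) hr0.ne'
        calc ‖f t x‖ = |m x| * |‖c‖ ^ (r - 2) * ⟪c, w x⟫| := by
              rw [hf]; simp [abs_mul, hc]
          _ = m x * |‖c‖ ^ (r - 2) * ⟪c, w x⟫| := by
              rw [abs_of_nonneg (le_trans hm₀.le hmx.1)]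
          _ ≤ m₁ * (a ^ r) := by
              exact mul_le_mul hmx.2 hz (abs_nonneg _) hm1
      · -- pointwise convergence
        refine Eventually.of_forall fun x => ?_
        rcases eq_or_ne (q x) 0 with hqx | hqx
        · -- q x = 0 : squeeze
          have hlim0 : Tendsto (fun t : ℝ =>
              ‖q x + t • w x‖ ^ (r - 2) * ⟪q x + t • w x, w x⟫)
              (nhdsWithin 0 (Set.Ioi 0)) (nhds 0) := by
            apply squeeze_zero_norm'
              (a := fun t : ℝ => t ^ (r - 1) * ‖w x‖ ^ r)
            · filter_upwards [self_mem_nhdsWithin] with t ht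
              have ht0 : (0:ℝ) < t := ht
              rw [hqx, zero_add]
              have e1 : ‖t • w x‖ = t * ‖w x‖ := by
                rw [norm_smul, Real.norm_of_nonneg ht0.le]
              have e2 : ⟪t • w x, w x⟫ = t * (‖w x‖ * ‖w x‖) := by
                rw [real_inner_smul_left, real_inner_self_eq_norm_mul_norm]
              rw [Real.norm_eq_abs, abs_mul, e1, e2,
                abs_of_nonneg (Real.rpow_nonneg (by positivity) _),
                abs_of_nonneg (by positivity),
                Real.mul_rpow ht0.le (norm_nonneg _)]
              have e3 : t ^ (r - 2) * ‖w x‖ ^ (r - 2) * (t * (‖w x‖ * ‖w x‖))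
                  = (t ^ (r - 2) * t) * ((‖w x‖ ^ (r - 2) * ‖w x‖) * ‖w x‖) := by ring
              rw [e3, rpow_mul_self_aux ht0.le (show r - 2 + 1 = r - 1 by ring) hr1'.ne',
                rpow_mul_self_aux (norm_nonneg (w x)) (show r - 2 + 1 = r - 1 by ring) hr1'.ne',
                rpow_mul_self_aux (norm_nonneg (w x)) (show r - 1 + 1 = r by ring) hr0.ne']
            · have h1 : Tendsto (fun t : ℝ => t ^ (r - 1)) (nhdsWithin 0 (Set.Ioi 0))
                  (nhds 0) := by
                have := (Real.continuousAt_rpow_const 0 (r - 1)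
                  (Or.inr hr1'.le)).tendsto.mono_left
                  (nhdsWithin_le_nhds (s := Set.Ioi (0:ℝ)))
                simpa [Real.zero_rpow hr1'.ne'] using this
              simpa using h1.mul_const (‖w x‖ ^ r)
          have : Tendsto (fun t : ℝ => f t x) (nhdsWithin 0 (Set.Ioi 0))
              (nhds (m x * 0)) := hlim0.const_mul (m x)
          simpa [hqx] using this
        · -- q x ≠ 0 : continuity
          have hc : Continuous fun t : ℝ => q x + t • w x :=
            continuous_const.add (continuous_id.smul continuous_const)
          have hcont : ContinuousAt (fun t : ℝ =>
              ‖q x + t • w x‖ ^ (r - 2) * ⟪q x + t • w x, w x⟫) 0 := by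
            apply ContinuousAt.mul
            · refine ContinuousAt.rpow_const (hc.norm.continuousAt) (Or.inl ?_)
              simp [hqx]
            · exact (hc.inner continuous_const).continuousAt
          have := (hcont.tendsto.mono_left
            (nhdsWithin_le_nhds (s := Set.Ioi (0:ℝ)))).const_mul (m x)
          simpa [hf] using this
    have : Tendsto (fun t => (∫ x, f t x ∂μ) + C) (nhdsWithin 0 (Set.Ioi 0))
        (nhds ((∫ x, m x * (‖q x‖ ^ (r - 2) * ⟪q x, w x⟫) ∂μ) + C)) :=
      stepB.add_const C
    refine ge_of_tendsto this ?_
    filter_upwards [self_mem_nhdsWithin] with t ht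
    exact stepA t ht
  intro v hv
  have h1 := key v hv
  have h2 := key (fun x => -(v x)) (by exact hv.neg)
  have e1 : (∫ x, m x * (‖q x‖ ^ (r - 2) * ⟪q x, -(v x)⟫) ∂μ)
      = -∫ x, m x * (‖q x‖ ^ (r - 2) * ⟪q x, v x⟫) ∂μ := by
    rw [← integral_neg]
    congr 1; funext x
    rw [inner_neg_right]; ring
  have e2 : (∫ x, ⟪g x, -(v x)⟫ ∂μ) = -∫ x, ⟪g x, v x⟫ ∂μ := by
    rw [← integral_neg]
    congr 1; funext x
    rw [inner_neg_right]
  rw [e1, e2] at h2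
  linarith
end
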